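/- Under the stated hypotheses, let H : (−ε,ε) × (a,b) → ℝⁿ be a smooth variation with (H(s,t), ∂H/∂t(s,t)) ∈ W for all (s,t), such that every curve t ↦ H(s,t) is a magnetic geodesic: ∂²H^i/∂t² + 2G^i(H, ∂H/∂t) = Y^i_j(H, ∂H/∂t) ∂H^j/∂t. Set T := ∂H/∂t, U := ∂H/∂s, and for a smooth vector field V(s,t) along the variation define the covariant derivative (D_T V)^i := ∂V^i/∂t + N^i_l(H,T) V^l. Then the magnetic Jacobi equation holds at every (s,t) (all coefficient functions evaluated at (H,T), summing over repeated indices): (D_T D_T U)^i = −R^i_k U^k + Y^i_j (D_T U)^j + U^k Y^i_{j|k} T^j + (D_T U)^l (∂Y^i_j/∂y^l) T^j + L^i_{jk} U^j Y^k_m T^m. -/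

import Mathlib

noncomputable section

/-- A point of the local chart `W ⊆ ℝⁿ × (ℝⁿ ∖ {0})` of `TM ∖ {0}`. -/
abbrev Pt (n : ℕ) := (Fin n → ℝ) × (Fin n → ℝ)

/-- Partial derivative in the `k`-th base (`x`) direction. -/
def pdx {n : ℕ} (k : Fin n) (f : Pt n → ℝ) (z : Pt n) : ℝ :=
  fderiv ℝ f z (Pi.single k 1, 0)

/-- Partial derivative in the `k`-th fibre (`y`) direction. -/
def pdy {n : ℕ} (k : Fin n) (f : Pt n → ℝ) (z : Pt n) : ℝ :=
  fderiv ℝ f z (0, Pi.single k 1)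

/-- The Riemann curvature of the spray:
`R^i_k := 2∂G^i/∂x^k − y^j ∂²G^i/∂x^j∂y^k + 2G^j ∂²G^i/∂y^j∂y^k
  − (∂G^i/∂y^j)(∂G^j/∂y^k)`. -/
def Rspray {n : ℕ} (G : Fin n → Pt n → ℝ) (i k : Fin n) (z : Pt n) : ℝ :=
  2 * pdx k (G i) z - (∑ j, z.2 j * pdx j (pdy k (G i)) z)
    + (2 * ∑ j, G j z * pdy j (pdy k (G i)) z)
    - ∑ j, pdy j (G i) z * pdy k (G j) z

/-- `L^i_{jk} := ∂²G^i/∂y^j∂y^k − Γ^i_{jk}`. -/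
def Lspray {n : ℕ} (G : Fin n → Pt n → ℝ) (Γ : Fin n → Fin n → Fin n → Pt n → ℝ)
    (i j k : Fin n) (z : Pt n) : ℝ :=
  pdy j (pdy k (G i)) z - Γ i j k z

/-- `Y^i_{j|k} := ∂Y^i_j/∂x^k − N^p_k ∂Y^i_j/∂y^p + Γ^i_{kp}Y^p_j − Γ^p_{kj}Y^i_p`,
with `N^p_k = ∂G^p/∂y^k`. -/
def Ydh {n : ℕ} (G : Fin n → Pt n → ℝ) (Γ : Fin n → Fin n → Fin n → Pt n → ℝ)
    (Y : Fin n → Fin n → Pt n → ℝ) (i j k : Fin n) (z : Pt n) : ℝ :=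
  pdx k (Y i j) z - (∑ p, pdy k (G p) z * pdy p (Y i j) z)
    + (∑ p, Γ i k p z * Y p j z) - ∑ p, Γ p k j z * Y i p z

/-- `T := ∂H/∂t` of a variation `H(s,t)`. -/
def Tt {n : ℕ} (H : ℝ × ℝ → Fin n → ℝ) (i : Fin n) (p : ℝ × ℝ) : ℝ :=
  deriv (fun τ => H (p.1, τ) i) p.2

/-- `U := ∂H/∂s` of a variation `H(s,t)`. -/
def Us {n : ℕ} (H : ℝ × ℝ → Fin n → ℝ) (i : Fin n) (p : ℝ × ℝ) : ℝ :=
  deriv (fun σ => H (σ, p.2) i) p.1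

/-- The lift `(H, ∂H/∂t)` of the variation to `TM`. -/
def PP {n : ℕ} (H : ℝ × ℝ → Fin n → ℝ) (p : ℝ × ℝ) : Pt n :=
  (H p, fun i => Tt H i p)

/-- Covariant derivative along `t ↦ H(s,t)`:
`(D_T V)^i := ∂V^i/∂t + N^i_l(H,T) V^l`, with `N^i_l = ∂G^i/∂y^l`. -/
def DT {n : ℕ} (G : Fin n → Pt n → ℝ) (H : ℝ × ℝ → Fin n → ℝ)
    (V : Fin n → ℝ × ℝ → ℝ) (i : Fin n) (p : ℝ × ℝ) : ℝ :=
  deriv (fun τ => V i (p.1, τ)) p.2 + ∑ l, pdy l (G i) (PP H p) * V l p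


open Filter Topology

section AuxAnalysis

variable {E F : Type*} [NormedAddCommGroup E] [NormedSpace ℝ E]
  [NormedAddCommGroup F] [NormedSpace ℝ F]

lemma hasDerivAt_slice_right {f : ℝ × ℝ → F} {L : ℝ × ℝ →L[ℝ] F} {s t : ℝ}
    (hf : HasFDerivAt f L (s, t)) : HasDerivAt (fun τ => f (s, τ)) (L (0, 1)) t :=
  hf.comp_hasDerivAt t (HasDerivAt.prodMk (hasDerivAt_const t s) (hasDerivAt_id t))

lemma hasDerivAt_slice_left {f : ℝ × ℝ → F} {L : ℝ × ℝ →L[ℝ] F} {s t : ℝ}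
    (hf : HasFDerivAt f L (s, t)) : HasDerivAt (fun σ => f (σ, t)) (L (1, 0)) s :=
  hf.comp_hasDerivAt s (HasDerivAt.prodMk (hasDerivAt_id s) (hasDerivAt_const s t))

lemma hasFDerivAt_of_contDiffOn {f : E → F} {S : Set E} (hS : IsOpen S)
    (hf : ContDiffOn ℝ (⊤ : ℕ∞) f S) {z : E} (hz : z ∈ S) :
    HasFDerivAt f (fderiv ℝ f z) z :=
  ((hf.contDiffAt (hS.mem_nhds hz)).differentiableAt (by simp)).hasFDerivAt

lemma contDiffOn_fderiv {f : E → F} {S : Set E} (hS : IsOpen S)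
    (hf : ContDiffOn ℝ (⊤ : ℕ∞) f S) :
    ContDiffOn ℝ (⊤ : ℕ∞) (fderiv ℝ f) S :=
  hf.fderiv_of_isOpen hS (by exact_mod_cast le_top)

lemma contDiffOn_fderiv_apply {f : E → F} {S : Set E} (hS : IsOpen S)
    (hf : ContDiffOn ℝ (⊤ : ℕ∞) f S) (w : E) :
    ContDiffOn ℝ (⊤ : ℕ∞) (fun q => fderiv ℝ f q w) S :=
  (contDiffOn_fderiv hS hf).clm_apply contDiffOn_const

lemma fderiv_apply_eq {f : E → F} {S : Set E} (hS : IsOpen S)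
    (hf : ContDiffOn ℝ (⊤ : ℕ∞) f S) {z : E} (hz : z ∈ S) (u v : E) :
    fderiv ℝ (fun q => fderiv ℝ f q u) z v = fderiv ℝ (fderiv ℝ f) z v u := by
  have hA : HasFDerivAt (fderiv ℝ f) (fderiv ℝ (fderiv ℝ f) z) z :=
    hasFDerivAt_of_contDiffOn hS (contDiffOn_fderiv hS hf) hz
  have h1 := hA.clm_apply (hasFDerivAt_const u z)
  rw [h1.fderiv]
  simp

lemma snd_symm {f : E → F} {S : Set E} (hS : IsOpen S) (hf : ContDiffOn ℝ (⊤ : ℕ∞) f S)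
    {z : E} (hz : z ∈ S) (v w : E) :
    fderiv ℝ (fun q => fderiv ℝ f q w) z v = fderiv ℝ (fun q => fderiv ℝ f q v) z w := by
  have hA : HasFDerivAt (fderiv ℝ f) (fderiv ℝ (fderiv ℝ f) z) z :=
    hasFDerivAt_of_contDiffOn hS (contDiffOn_fderiv hS hf) hz
  have hev : ∀ᶠ q in 𝓝 z, HasFDerivAt f (fderiv ℝ f q) q := by
    filter_upwards [hS.mem_nhds hz] with q hq using hasFDerivAt_of_contDiffOn hS hf hq
  have hsymm := second_derivative_symmetric_of_eventually hev hA v w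
  rw [fderiv_apply_eq hS hf hz w v, fderiv_apply_eq hS hf hz v w, hsymm]

lemma eventually_slice_right {P : Set (ℝ × ℝ)} (hP : IsOpen P) {p : ℝ × ℝ} (hp : p ∈ P) :
    ∀ᶠ τ in 𝓝 p.2, ((p.1, τ) : ℝ × ℝ) ∈ P := by
  have hc : ContinuousAt (fun τ : ℝ => ((p.1, τ) : ℝ × ℝ)) p.2 :=
    (continuous_const.prodMk continuous_id).continuousAt
  exact hc.preimage_mem_nhds (hP.mem_nhds hp)

lemma eventually_slice_left {P : Set (ℝ × ℝ)} (hP : IsOpen P) {p : ℝ × ℝ} (hp : p ∈ P) :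
    ∀ᶠ σ in 𝓝 p.1, ((σ, p.2) : ℝ × ℝ) ∈ P := by
  have hc : ContinuousAt (fun σ : ℝ => ((σ, p.2) : ℝ × ℝ)) p.1 :=
    (continuous_id.prodMk continuous_const).continuousAt
  exact hc.preimage_mem_nhds (hP.mem_nhds hp)

end AuxAnalysis
section AuxExpand

lemma pair_sum_expand {n : ℕ} (u v : Fin n → ℝ) :
    ((u, v) : Pt n)
      = (∑ k, u k • ((Pi.single k 1, 0) : Pt n)) + ∑ k, v k • ((0, Pi.single k 1) : Pt n) := by
  apply Prod.ext
  · simp [Prod.fst_sum, ← Pi.single_smul, Finset.univ_sum_single]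
  · simp [Prod.snd_sum, ← Pi.single_smul, Finset.univ_sum_single]

lemma clm_expand {n : ℕ} (L : Pt n →L[ℝ] ℝ) (u v : Fin n → ℝ) :
    L (u, v) = (∑ k, u k * L (Pi.single k 1, 0)) + ∑ k, v k * L (0, Pi.single k 1) := by
  rw [pair_sum_expand, map_add, map_sum, map_sum]
  congr 1
  · exact Finset.sum_congr rfl fun k _ => by rw [L.map_smul, smul_eq_mul]
  · exact Finset.sum_congr rfl fun k _ => by rw [L.map_smul, smul_eq_mul]

end AuxExpand
section AuxAlgebra

lemma sum3_swap23 {n : ℕ} (f : Fin n → Fin n → Fin n → ℝ) :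
    ∑ a, ∑ b, ∑ c, f a b c = ∑ a, ∑ c, ∑ b, f a b c :=
  Finset.sum_congr rfl fun _ _ => Finset.sum_comm

lemma sum3_rot {n : ℕ} (f : Fin n → Fin n → Fin n → ℝ) :
    ∑ a, ∑ b, ∑ c, f a b c = ∑ b, ∑ c, ∑ a, f a b c := by
  rw [Finset.sum_comm (f := fun a b => ∑ c, f a b c)]
  exact sum3_swap23 _

lemma sum3_rev {n : ℕ} (f : Fin n → Fin n → Fin n → ℝ) :
    ∑ a, ∑ b, ∑ c, f a b c = ∑ c, ∑ b, ∑ a, f a b c := by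
  rw [sum3_swap23, Finset.sum_comm (f := fun a c => ∑ b, f a b c)]
  exact Finset.sum_congr rfl fun c _ => Finset.sum_comm

lemma final_algebra {n : ℕ} (i : Fin n)
    (T u m Gv : Fin n → ℝ)
    (gx gy : Fin n → Fin n → ℝ)
    (gxy gyy : Fin n → Fin n → Fin n → ℝ)
    (Yv : Fin n → Fin n → ℝ) (Yx Yy : Fin n → Fin n → Fin n → ℝ)
    (Γv : Fin n → Fin n → Fin n → ℝ)
    (hgyy : ∀ a b c, gyy a b c = gyy b a c)
    (hΓN : ∀ a b, (∑ k, Γv a b k * T k) = gy b a) :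
    ((∑ j, ((∑ k, Yx i j k * u k + ∑ k, Yy i j k * m k) * T j + Yv i j * m j)
        - 2 * (∑ k, gx k i * u k + ∑ k, gy k i * m k))
      + ∑ l, ((∑ k, gxy k l i * T k
            + ∑ k, gyy k l i * ((∑ q, Yv k q * T q) - 2 * Gv k)) * u l
          + gy l i * m l))
      + ∑ l, gy l i * (m l + ∑ q, gy q l * u q)
    = -(∑ k, (2 * gx k i - (∑ j, T j * gxy j k i) + (2 * ∑ j, Gv j * gyy j k i)
            - ∑ j, gy j i * gy k j) * u k)
      + (∑ j, Yv i j * (m j + ∑ q, gy q j * u q))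
      + (∑ j, ∑ k, u k * (Yx i j k - (∑ p, gy k p * Yy i j p)
            + (∑ p, Γv i k p * Yv p j) - ∑ p, Γv p k j * Yv i p) * T j)
      + (∑ j, ∑ l, (m l + ∑ q, gy q l * u q) * Yy i j l * T j)
      + ∑ j, ∑ k, ∑ mm, (gyy j k i - Γv i j k) * u j * Yv k mm * T mm := by
  have e1 : (∑ x : Fin n, ∑ y : Fin n, Yx i x y * u y * T x)
      = ∑ x : Fin n, ∑ y : Fin n, u y * Yx i x y * T x :=
    Finset.sum_congr rfl fun x _ => Finset.sum_congr rfl fun y _ => by ring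
  have e2 : (∑ x : Fin n, ∑ y : Fin n, Yy i x y * m y * T x)
      = ∑ x : Fin n, ∑ y : Fin n, m y * Yy i x y * T x :=
    Finset.sum_congr rfl fun x _ => Finset.sum_congr rfl fun y _ => by ring
  have e3 : (∑ x : Fin n, ∑ y : Fin n, gxy y x i * T y * u x)
      = ∑ x : Fin n, ∑ y : Fin n, T y * gxy y x i * u x :=
    Finset.sum_congr rfl fun x _ => Finset.sum_congr rfl fun y _ => by ring
  have e4 : (∑ x : Fin n, 2 * gy x i * m x) = (∑ k : Fin n, gy k i * m k) * 2 := by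
    rw [Finset.sum_mul]
    exact Finset.sum_congr rfl fun x _ => by ring
  have e5 : (∑ x : Fin n, ∑ y : Fin n, ∑ w : Fin n, gyy y x i * Yv y w * T w * u x)
      = ∑ x : Fin n, ∑ y : Fin n, ∑ w : Fin n, gyy x y i * u x * Yv y w * T w :=
    Finset.sum_congr rfl fun x _ => Finset.sum_congr rfl fun y _ =>
      Finset.sum_congr rfl fun w _ => by rw [hgyy y x i]; ring
  have e6 : (∑ x : Fin n, ∑ y : Fin n, gyy y x i * Gv y * 2 * u x)
      = ∑ x : Fin n, ∑ y : Fin n, 2 * Gv y * gyy y x i * u x :=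
    Finset.sum_congr rfl fun x _ => Finset.sum_congr rfl fun y _ => by ring
  have e7 : (∑ x : Fin n, ∑ y : Fin n, gy x i * gy y x * u y)
      = ∑ x : Fin n, ∑ y : Fin n, gy y i * gy x y * u x := Finset.sum_comm
  have e8 : (∑ x : Fin n, ∑ y : Fin n, ∑ w : Fin n, gy w y * u w * Yy i x y * T x)
      = ∑ x : Fin n, ∑ y : Fin n, ∑ w : Fin n, u y * gy y w * Yy i x w * T x :=
    Finset.sum_congr rfl fun x _ => by
      rw [Finset.sum_comm]
      exact Finset.sum_congr rfl fun b _ => Finset.sum_congr rfl fun c _ => by ring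
  have e9 : (∑ x : Fin n, ∑ y : Fin n, ∑ w : Fin n, u y * Γv i y w * Yv w x * T x)
      = ∑ x : Fin n, ∑ y : Fin n, ∑ w : Fin n, Γv i x y * u x * Yv y w * T w := by
    have h := sum3_rot (fun a b c => u b * Γv i b c * Yv c a * T a)
    rw [h]
    exact Finset.sum_congr rfl fun x _ => Finset.sum_congr rfl fun y _ =>
      Finset.sum_congr rfl fun w _ => by ring
  have e10 : (∑ x : Fin n, ∑ y : Fin n, Yv i x * gy y x * u y)
      = ∑ x : Fin n, ∑ y : Fin n, ∑ w : Fin n, u y * Γv w y x * Yv i w * T x := by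
    simp only [← hΓN, Finset.mul_sum, Finset.sum_mul]
    have h := sum3_rev (fun a b c => Yv i a * (Γv a b c * T c) * u b)
    rw [h]
    exact Finset.sum_congr rfl fun x _ => Finset.sum_congr rfl fun y _ =>
      Finset.sum_congr rfl fun w _ => by ring
  simp only [mul_add, add_mul, mul_sub, sub_mul, Finset.sum_add_distrib,
    Finset.sum_sub_distrib, Finset.mul_sum, Finset.sum_mul, neg_mul, mul_neg, neg_neg,
    neg_add, neg_sub, Finset.sum_neg_distrib]
  ring_nf at e1 e2 e3 e4 e5 e6 e7 e8 e9 e10 ⊢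
  linarith [e1, e2, e3, e4, e5, e6, e7, e8, e9, e10]

end AuxAlgebra
section MainAux

/-- `∂H/∂t` as an everywhere-defined fderiv expression (smooth representative of `Tt`). -/
def Trep {n : ℕ} (H : ℝ × ℝ → Fin n → ℝ) (k : Fin n) (q : ℝ × ℝ) : ℝ :=
  fderiv ℝ (fun r => H r k) q (0, 1)

/-- `∂H/∂s` as an everywhere-defined fderiv expression (smooth representative of `Us`). -/
def Urep {n : ℕ} (H : ℝ × ℝ → Fin n → ℝ) (k : Fin n) (q : ℝ × ℝ) : ℝ :=
  fderiv ℝ (fun r => H r k) q (1, 0)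

/-- The mixed second derivative `∂²H/∂s∂t`. -/
def Mrep {n : ℕ} (H : ℝ × ℝ → Fin n → ℝ) (k : Fin n) (q : ℝ × ℝ) : ℝ :=
  fderiv ℝ (Trep H k) q (1, 0)

end MainAux

/-- **The Jacobi equation for the magnetic flow of a Finsler metric:** for a
variation through magnetic geodesics, the transverse field `U = ∂H/∂s` satisfies
`D_T D_T U = −R(U) + Y(D_T U) + (∇_{|U}Y)(T) + (∇_{·D_T U}Y)(T) + L(U, Y(T))`. -/
theorem stmt_15 (n : ℕ) (hn : 1 ≤ n) (W : Set (Pt n)) (hWopen : IsOpen W)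
    (hWy : ∀ z ∈ W, z.2 ≠ 0)
    (hWcone : ∀ z ∈ W, ∀ t : ℝ, 0 < t → (z.1, t • z.2) ∈ W)
    (G : Fin n → Pt n → ℝ) (hGsmooth : ∀ i, ContDiffOn ℝ (⊤ : ℕ∞) (G i) W)
    (Γ : Fin n → Fin n → Fin n → Pt n → ℝ)
    (hΓsmooth : ∀ i j k, ContDiffOn ℝ (⊤ : ℕ∞) (Γ i j k) W)
    (hΓsym : ∀ i j k, ∀ z ∈ W, Γ i j k z = Γ i k j z)
    (hΓN : ∀ z ∈ W, ∀ i j, (∑ k, Γ i j k z * z.2 k) = pdy j (G i) z)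
    (Y : Fin n → Fin n → Pt n → ℝ)
    (hYsmooth : ∀ i j, ContDiffOn ℝ (⊤ : ℕ∞) (Y i j) W)
    (ε a b : ℝ) (hε : 0 < ε)
    (H : ℝ × ℝ → Fin n → ℝ)
    (hH : ContDiffOn ℝ (⊤ : ℕ∞) H (Set.Ioo (-ε) ε ×ˢ Set.Ioo a b))
    (hmem : ∀ p ∈ Set.Ioo (-ε) ε ×ˢ Set.Ioo a b, PP H p ∈ W)
    (hgeo : ∀ p ∈ Set.Ioo (-ε) ε ×ˢ Set.Ioo a b, ∀ i,
      deriv (fun τ => Tt H i (p.1, τ)) p.2 + 2 * G i (PP H p)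
        = ∑ j, Y i j (PP H p) * Tt H j p) :
    ∀ p ∈ Set.Ioo (-ε) ε ×ˢ Set.Ioo a b, ∀ i,
      DT G H (DT G H (Us H)) i p
        = -(∑ k, Rspray G i k (PP H p) * Us H k p)
          + (∑ j, Y i j (PP H p) * DT G H (Us H) j p)
          + (∑ j, ∑ k, Us H k p * Ydh G Γ Y i j k (PP H p) * Tt H j p)
          + (∑ j, ∑ l, DT G H (Us H) l p * pdy l (Y i j) (PP H p) * Tt H j p)
          + ∑ j, ∑ k, ∑ m,
              Lspray G Γ i j k (PP H p) * Us H j p * Y k m (PP H p) * Tt H m p := by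
  have hPopen : IsOpen (Set.Ioo (-ε) ε ×ˢ Set.Ioo a b) := isOpen_Ioo.prod isOpen_Ioo
  set P := Set.Ioo (-ε) ε ×ˢ Set.Ioo a b with hPdef
  intro p hp i
  have hz : PP H p ∈ W := hmem p hp
  -- components of H are smooth
  have hF : ∀ k, ContDiffOn ℝ (⊤ : ℕ∞) (fun q => H q k) P := fun k => contDiffOn_pi.1 hH k
  -- smoothness of the representatives
  have hTsm : ∀ k, ContDiffOn ℝ (⊤ : ℕ∞) (Trep H k) P := fun k =>
    contDiffOn_fderiv_apply hPopen (hF k) (0, 1)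
  have hUsm : ∀ k, ContDiffOn ℝ (⊤ : ℕ∞) (Urep H k) P := fun k =>
    contDiffOn_fderiv_apply hPopen (hF k) (1, 0)
  have hMsm : ∀ k, ContDiffOn ℝ (⊤ : ℕ∞) (Mrep H k) P := fun k =>
    contDiffOn_fderiv_apply hPopen (hTsm k) (1, 0)
  -- `Tt`/`Us` agree with the representatives on `P`
  have hTeq : ∀ k, ∀ q ∈ P, Tt H k q = Trep H k q := fun k q hq =>
    (hasDerivAt_slice_right (hasFDerivAt_of_contDiffOn hPopen (hF k) hq)).deriv
  have hUeq : ∀ k, ∀ q ∈ P, Us H k q = Urep H k q := fun k q hq =>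
    (hasDerivAt_slice_left (hasFDerivAt_of_contDiffOn hPopen (hF k) hq)).deriv
  have hTtP : ∀ k, ContDiffOn ℝ (⊤ : ℕ∞) (Tt H k) P := fun k =>
    (hTsm k).congr fun q hq => hTeq k q hq
  have hPPsm : ContDiffOn ℝ (⊤ : ℕ∞) (PP H) P :=
    ContDiffOn.prodMk hH (contDiffOn_pi.2 fun k => hTtP k)
  have hPPmaps : Set.MapsTo (PP H) P W := fun q hq => hmem q hq
  -- symmetry of the mixed second derivative
  have hMsymm : ∀ k, ∀ q ∈ P, fderiv ℝ (Urep H k) q (0, 1) = Mrep H k q := fun k q hq =>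
    snd_symm hPopen (hF k) hq (0, 1) (1, 0)
  -- `∂/∂t` of `Us` is the mixed derivative
  have hDtUs : ∀ k, ∀ q ∈ P, HasDerivAt (fun τ => Us H k (q.1, τ)) (Mrep H k q) q.2 := by
    intro k q hq
    have h1 : HasDerivAt (fun τ => Urep H k (q.1, τ)) (fderiv ℝ (Urep H k) q (0, 1)) q.2 :=
      hasDerivAt_slice_right (hasFDerivAt_of_contDiffOn hPopen (hUsm k) hq)
    rw [hMsymm k q hq] at h1
    apply h1.congr_of_eventuallyEq
    filter_upwards [eventually_slice_right hPopen hq] with τ hτ using hUeq k (q.1, τ) hτ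
  -- `∂/∂s` of `Tt` is the mixed derivative
  have hDsTt : ∀ k, ∀ q ∈ P, HasDerivAt (fun σ => Tt H k (σ, q.2)) (Mrep H k q) q.1 := by
    intro k q hq
    have h1 : HasDerivAt (fun σ => Trep H k (σ, q.2)) (Mrep H k q) q.1 :=
      hasDerivAt_slice_left (hasFDerivAt_of_contDiffOn hPopen (hTsm k) hq)
    apply h1.congr_of_eventuallyEq
    filter_upwards [eventually_slice_left hPopen hq] with σ hσ using hTeq k (σ, q.2) hσ
  -- `∂/∂t` of `Tt`
  have hDtTt : ∀ k, ∀ q ∈ P,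
      HasDerivAt (fun τ => Tt H k (q.1, τ)) (fderiv ℝ (Trep H k) q (0, 1)) q.2 := by
    intro k q hq
    have h1 : HasDerivAt (fun τ => Trep H k (q.1, τ)) (fderiv ℝ (Trep H k) q (0, 1)) q.2 :=
      hasDerivAt_slice_right (hasFDerivAt_of_contDiffOn hPopen (hTsm k) hq)
    apply h1.congr_of_eventuallyEq
    filter_upwards [eventually_slice_right hPopen hq] with τ hτ using hTeq k (q.1, τ) hτ
  -- geodesic equation in representative form
  have hTdot : ∀ k, ∀ q ∈ P, fderiv ℝ (Trep H k) q (0, 1)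
      = (∑ j, Y k j (PP H q) * Tt H j q) - 2 * G k (PP H q) := by
    intro k q hq
    have h1 := (hDtTt k q hq).deriv
    have h2 := hgeo q hq k
    linarith [h1, h2]
  -- derivative of the lifted curve in the `t`-direction
  have curve_t : ∀ q ∈ P, HasDerivAt (fun τ => PP H (q.1, τ))
      ((fun k => Tt H k q, fun k => fderiv ℝ (Trep H k) q (0, 1)) : Pt n) q.2 := by
    intro q hq
    show HasDerivAt (fun τ => ((H (q.1, τ), fun k => Tt H k (q.1, τ)) : Pt n)) _ q.2
    apply HasDerivAt.prodMk
    · apply hasDerivAt_pi.2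
      intro k
      have h1 : HasDerivAt (fun τ => H (q.1, τ) k) (fderiv ℝ (fun r => H r k) q (0, 1)) q.2 :=
        hasDerivAt_slice_right (hasFDerivAt_of_contDiffOn hPopen (hF k) hq)
      show HasDerivAt (fun τ => H (q.1, τ) k) (Tt H k q) q.2
      rw [hTeq k q hq]
      exact h1
    · apply hasDerivAt_pi.2
      intro k
      exact hDtTt k q hq
  -- derivative of the lifted curve in the `s`-direction
  have curve_s : ∀ q ∈ P, HasDerivAt (fun σ => PP H (σ, q.2))
      ((fun k => Us H k q, fun k => Mrep H k q) : Pt n) q.1 := by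
    intro q hq
    show HasDerivAt (fun σ => ((H (σ, q.2), fun k => Tt H k (σ, q.2)) : Pt n)) _ q.1
    apply HasDerivAt.prodMk
    · apply hasDerivAt_pi.2
      intro k
      have h1 : HasDerivAt (fun σ => H (σ, q.2) k) (fderiv ℝ (fun r => H r k) q (1, 0)) q.1 :=
        hasDerivAt_slice_left (hasFDerivAt_of_contDiffOn hPopen (hF k) hq)
      show HasDerivAt (fun σ => H (σ, q.2) k) (Us H k q) q.1
      rw [hUeq k q hq]
      exact h1
    · apply hasDerivAt_pi.2
      intro k
      exact hDsTt k q hq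
  -- chain rule along the `t`-direction
  have cht : ∀ f : Pt n → ℝ, ContDiffOn ℝ (⊤ : ℕ∞) f W → ∀ q ∈ P,
      HasDerivAt (fun τ => f (PP H (q.1, τ)))
        ((∑ k, Tt H k q * pdx k f (PP H q))
          + ∑ k, fderiv ℝ (Trep H k) q (0, 1) * pdy k f (PP H q)) q.2 := by
    intro f hf q hq
    have h := (hasFDerivAt_of_contDiffOn hWopen hf (hmem q hq)).comp_hasDerivAt q.2
      (curve_t q hq)
    rw [clm_expand] at h
    exact h
  -- chain rule along the `s`-direction
  have chs : ∀ f : Pt n → ℝ, ContDiffOn ℝ (⊤ : ℕ∞) f W → ∀ q ∈ P,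
      HasDerivAt (fun σ => f (PP H (σ, q.2)))
        ((∑ k, Us H k q * pdx k f (PP H q))
          + ∑ k, Mrep H k q * pdy k f (PP H q)) q.1 := by
    intro f hf q hq
    have h := (hasFDerivAt_of_contDiffOn hWopen hf (hmem q hq)).comp_hasDerivAt q.1
      (curve_s q hq)
    rw [clm_expand] at h
    exact h
  -- The `s`-derivative of the geodesic right-hand side
  have hDD : HasDerivAt
      (fun σ => (∑ j, Y i j (PP H (σ, p.2)) * Tt H j (σ, p.2)) - 2 * G i (PP H (σ, p.2)))
      ((∑ j, (((∑ k, Us H k p * pdx k (Y i j) (PP H p))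
            + ∑ k, Mrep H k p * pdy k (Y i j) (PP H p)) * Tt H j p
          + Y i j (PP H p) * Mrep H j p))
        - 2 * ((∑ k, Us H k p * pdx k (G i) (PP H p))
            + ∑ k, Mrep H k p * pdy k (G i) (PP H p))) p.1 := by
    apply HasDerivAt.sub
    · exact HasDerivAt.fun_sum fun j _ => (chs (Y i j) (hYsmooth i j) p hp).mul (hDsTt j p hp)
    · exact ((chs (G i) (hGsmooth i) p hp)).const_mul 2
  -- smoothness of the geodesic right-hand side
  have hgeoRsm : ContDiffOn ℝ (⊤ : ℕ∞)
      (fun q => (∑ j, Y i j (PP H q) * Tt H j q) - 2 * G i (PP H q)) P := by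
    apply ContDiffOn.sub
    · exact ContDiffOn.sum fun j _ => ((hYsmooth i j).comp hPPsm hPPmaps).mul (hTtP j)
    · exact contDiffOn_const.mul ((hGsmooth i).comp hPPsm hPPmaps)
  -- the key third-derivative computation: `∂t∂t Us = ∂s (geodesic RHS)`
  have hDDeq : fderiv ℝ (Mrep H i) p (0, 1)
      = (∑ j, (((∑ k, Us H k p * pdx k (Y i j) (PP H p))
            + ∑ k, Mrep H k p * pdy k (Y i j) (PP H p)) * Tt H j p
          + Y i j (PP H p) * Mrep H j p))
        - 2 * ((∑ k, Us H k p * pdx k (G i) (PP H p))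
            + ∑ k, Mrep H k p * pdy k (G i) (PP H p)) := by
    have step1 : fderiv ℝ (Mrep H i) p (0, 1)
        = fderiv ℝ (fun q => fderiv ℝ (Trep H i) q (0, 1)) p (1, 0) :=
      snd_symm hPopen (hTsm i) hp (0, 1) (1, 0)
    have hev : (fun q => fderiv ℝ (Trep H i) q (0, 1))
        =ᶠ[𝓝 p] fun q => (∑ j, Y i j (PP H q) * Tt H j q) - 2 * G i (PP H q) := by
      filter_upwards [hPopen.mem_nhds hp] with q hq using hTdot i q hq
    have step2 : fderiv ℝ (fun q => fderiv ℝ (Trep H i) q (0, 1)) p (1, 0)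
        = fderiv ℝ (fun q => (∑ j, Y i j (PP H q) * Tt H j q) - 2 * G i (PP H q)) p (1, 0) := by
      rw [hev.fderiv_eq]
    have hslice : HasDerivAt
        (fun σ => (∑ j, Y i j (PP H (σ, p.2)) * Tt H j (σ, p.2)) - 2 * G i (PP H (σ, p.2)))
        (fderiv ℝ (fun q => (∑ j, Y i j (PP H q) * Tt H j q) - 2 * G i (PP H q)) p (1, 0))
        p.1 :=
      hasDerivAt_slice_left (hasFDerivAt_of_contDiffOn hPopen hgeoRsm hp)
    rw [step1, step2]
    exact hslice.unique hDD
  -- value of `DT (Us)` on `P`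
  have hV : ∀ l, ∀ q ∈ P, DT G H (Us H) l q
      = Mrep H l q + ∑ l', pdy l' (G l) (PP H q) * Us H l' q := by
    intro l q hq
    have h0 : DT G H (Us H) l q
        = deriv (fun τ => Us H l (q.1, τ)) q.2 + ∑ l', pdy l' (G l) (PP H q) * Us H l' q := rfl
    rw [h0, (hDtUs l q hq).deriv]
  have hVp : ∀ l, DT G H (Us H) l p
      = Mrep H l p + ∑ l', pdy l' (G l) (PP H p) * Us H l' p := fun l => hV l p hp
  -- smoothness of `pdy l (G i)` on `W`
  have hpdyG : ∀ l, ContDiffOn ℝ (⊤ : ℕ∞) (pdy l (G i)) W := fun l =>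
    contDiffOn_fderiv_apply hWopen (hGsmooth i) (0, Pi.single l 1)
  -- the outer `t`-derivative of `DT (Us) i`
  have hOuter : HasDerivAt (fun τ => DT G H (Us H) i (p.1, τ))
      ((fderiv ℝ (Mrep H i) p (0, 1))
        + ∑ l, (((∑ k, Tt H k p * pdx k (pdy l (G i)) (PP H p))
            + ∑ k, fderiv ℝ (Trep H k) p (0, 1) * pdy k (pdy l (G i)) (PP H p)) * Us H l p
          + pdy l (G i) (PP H p) * Mrep H l p)) p.2 := by
    have hMslice : HasDerivAt (fun τ => Mrep H i (p.1, τ)) (fderiv ℝ (Mrep H i) p (0, 1)) p.2 :=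
      hasDerivAt_slice_right (hasFDerivAt_of_contDiffOn hPopen (hMsm i) hp)
    have hbase : HasDerivAt
        (fun τ => Mrep H i (p.1, τ) + ∑ l, pdy l (G i) (PP H (p.1, τ)) * Us H l (p.1, τ))
        ((fderiv ℝ (Mrep H i) p (0, 1))
          + ∑ l, (((∑ k, Tt H k p * pdx k (pdy l (G i)) (PP H p))
              + ∑ k, fderiv ℝ (Trep H k) p (0, 1) * pdy k (pdy l (G i)) (PP H p)) * Us H l p
            + pdy l (G i) (PP H p) * Mrep H l p)) p.2 :=
      hMslice.add (HasDerivAt.fun_sum fun l _ =>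
        (cht (pdy l (G i)) (hpdyG l) p hp).mul (hDtUs l p hp))
    apply hbase.congr_of_eventuallyEq
    filter_upwards [eventually_slice_right hPopen hp] with τ hτ using hV i (p.1, τ) hτ
  -- assemble and reduce to algebra
  have hsplit : DT G H (DT G H (Us H)) i p
      = deriv (fun τ => DT G H (Us H) i (p.1, τ)) p.2
        + ∑ l, pdy l (G i) (PP H p) * DT G H (Us H) l p := rfl
  have hTdotp : ∀ k, fderiv ℝ (Trep H k) p (0, 1)
      = (∑ j, Y k j (PP H p) * Tt H j p) - 2 * G k (PP H p) := fun k => hTdot k p hp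
  have hgyy : ∀ a b c : Fin n,
      pdy a (pdy b (G c)) (PP H p) = pdy b (pdy a (G c)) (PP H p) := fun a b c =>
    snd_symm hWopen (hGsmooth c) hz (0, Pi.single a 1) (0, Pi.single b 1)
  have hΓN' : ∀ a b : Fin n,
      (∑ k, Γ a b k (PP H p) * Tt H k p) = pdy b (G a) (PP H p) := fun a b => hΓN (PP H p) hz a b
  have halg := final_algebra i (fun k => Tt H k p) (fun k => Us H k p) (fun k => Mrep H k p)
    (fun k => G k (PP H p))
    (fun k i' => pdx k (G i') (PP H p)) (fun k i' => pdy k (G i') (PP H p))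
    (fun j k i' => pdx j (pdy k (G i')) (PP H p)) (fun j k i' => pdy j (pdy k (G i')) (PP H p))
    (fun a b => Y a b (PP H p)) (fun a b c => pdx c (Y a b) (PP H p))
    (fun a b c => pdy c (Y a b) (PP H p)) (fun a b c => Γ a b c (PP H p))
    hgyy hΓN'
  rw [hsplit, hOuter.deriv, hDDeq]
  have hz2 : ∀ j : Fin n, (PP H p).2 j = Tt H j p := fun _ => rfl
  simp only [hVp, hTdotp, Rspray, Lspray, Ydh, hz2] at halg ⊢
  simp only [mul_add, add_mul, mul_sub, sub_mul, Finset.sum_add_distrib,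
    Finset.sum_sub_distrib, Finset.mul_sum, Finset.sum_mul, neg_mul, mul_neg, neg_neg,
    neg_add, neg_sub, Finset.sum_neg_distrib] at halg ⊢
  simp only [mul_comm, mul_left_comm, mul_assoc] at halg ⊢
  linarith [halg]

end
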